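/- Let D be a Bayesian network distribution on {0,1}^n whose DAG is topologically ordered by the identity ordering, let f : {0,1}^n → ℝ, let 0 ≤ k ≤ n, and let α ⊆ {n−k+1,…,n}. With g_α(u) = Σ_{β ⊆ {1,…,n−k}} f̂_{β∪α} φ_β(u) as above, and U distributed as the marginal of the first n−k coordinates of X ∼ D, one has E_U[g_α(U)²] = Σ_{β ⊆ {1,…,n−k}} (f̂_{β∪α})². -/
import Mathlib


/-!
A Bayesian network (BN) distribution on {0,1}^n: a DAG on [n] (encoded by parent
sets together with a rank function witnessing acyclicity) and, for each node `v`,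
a conditional probability `cond v x ∈ (0,1)` of `X_v = 1` given the parent values,
depending only on the coordinates in `pa v`.  The joint distribution is
`prob x = ∏ v, P(x_v | x_{pa v})`, and the BN-induced basis functions are
`φ_v(x) = (x_v − μ_{v,x_pa(v)})/σ_{v,x_pa(v)}`, `φ_S = ∏_{v∈S} φ_v`.
-/

open Finset

noncomputable section

/-- Interpret a Boolean as a real number (`true ↦ 1`, `false ↦ 0`). -/
def b2r (b : Bool) : ℝ := if b then 1 else 0

/-- A Bayesian network distribution on `{0,1}^n`. -/
structure BayesNet (n : ℕ) where
  /-- parent set of each node -/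
  pa : Fin n → Finset (Fin n)
  /-- the parent relation is acyclic (a DAG) -/
  acyclic : ∃ rank : Fin n → ℕ, ∀ v u, u ∈ pa v → rank u < rank v
  /-- `cond v x = P(X_v = 1 | X_{pa v} = x_{pa v})` -/
  cond : Fin n → (Fin n → Bool) → ℝ
  /-- the conditional probability of `v` depends only on the parents of `v` -/
  cond_local : ∀ v x y, (∀ u ∈ pa v, x u = y u) → cond v x = cond v y
  cond_pos : ∀ v x, 0 < cond v x
  cond_lt_one : ∀ v x, cond v x < 1

namespace BayesNet

variable {n : ℕ}

/-- The joint probability mass function `D(x) = ∏_v P(x_v | x_{pa v})`. -/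
def prob (B : BayesNet n) (x : Fin n → Bool) : ℝ :=
  ∏ v, if x v then B.cond v x else 1 - B.cond v x

/-- Conditional standard deviation `σ_{v, x_{pa v}}`. -/
def sigma (B : BayesNet n) (v : Fin n) (x : Fin n → Bool) : ℝ :=
  Real.sqrt (B.cond v x * (1 - B.cond v x))

/-- BN-induced basis function of a single node. -/
def phi (B : BayesNet n) (v : Fin n) (x : Fin n → Bool) : ℝ :=
  (b2r (x v) - B.cond v x) / B.sigma v x

/-- BN-induced basis function `φ_S = ∏_{v ∈ S} φ_v` (with `φ_∅ ≡ 1`). -/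
def phiS (B : BayesNet n) (S : Finset (Fin n)) (x : Fin n → Bool) : ℝ :=
  ∏ v ∈ S, B.phi v x

/-- Expectation with respect to the BN distribution. -/
def expect (B : BayesNet n) (g : (Fin n → Bool) → ℝ) : ℝ :=
  ∑ x, B.prob x * g x

/-- Fourier coefficient `f̂_S = E_D[f(X) φ_S(X)]`. -/
def coeff (B : BayesNet n) (f : (Fin n → Bool) → ℝ) (S : Finset (Fin n)) : ℝ :=
  B.expect fun x => f x * B.phiS S x

/-- Conditional expectation `E[g(X) | X_u = y_u for all u ∈ A]`. -/
def condExp (B : BayesNet n) (g : (Fin n → Bool) → ℝ) (A : Finset (Fin n))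
    (y : Fin n → Bool) : ℝ :=
  (∑ x ∈ univ.filter (fun x : Fin n → Bool => ∀ u ∈ A, x u = y u), B.prob x * g x) /
  (∑ x ∈ univ.filter (fun x : Fin n → Bool => ∀ u ∈ A, x u = y u), B.prob x)

/-- The union of the parent sets of the nodes of `S`. -/
def paS (B : BayesNet n) (S : Finset (Fin n)) : Finset (Fin n) := S.biUnion B.pa

/-- Spectral norm `L1(f) = Σ_S |f̂_S|`. -/
def L1 (B : BayesNet n) (f : (Fin n → Bool) → ℝ) : ℝ :=
  ∑ S : Finset (Fin n), |B.coeff f S|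

end BayesNet


namespace BNAux

open Function

variable {n : ℕ}

lemma sum_out (v : Fin n) (F : (Fin n → Bool) → ℝ) :
    ∑ x : Fin n → Bool, F x
      = ∑ x ∈ univ.filter (fun x : Fin n → Bool => x v = false),
          (F x + F (Function.update x v true)) := by
  classical
  rw [Finset.sum_add_distrib]
  rw [← Finset.sum_filter_add_sum_filter_not univ (fun x : Fin n → Bool => x v = false) F]
  congr 1
  apply Finset.sum_nbij' (i := fun x => Function.update x v false)
    (j := fun x => Function.update x v true)
  · intro a ha
    simp only [Finset.mem_filter, Finset.mem_univ, true_and] at ha ⊢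
    simp
  · intro a ha
    simp only [Finset.mem_filter, Finset.mem_univ, true_and] at ha ⊢
    simp
  · intro a ha
    simp only [Finset.mem_filter, Finset.mem_univ, true_and] at ha
    funext w
    by_cases hw : w = v
    · subst hw; simp [ha]
    · simp [Function.update_of_ne hw]
  · intro a ha
    simp only [Finset.mem_filter, Finset.mem_univ, true_and] at ha
    funext w
    by_cases hw : w = v
    · subst hw; simp [ha]
    · simp [Function.update_of_ne hw]
  · intro a ha
    simp only [Finset.mem_filter, Finset.mem_univ, true_and] at ha
    congr 1
    funext w
    by_cases hw : w = v
    · subst hw; simp [ha]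
    · simp [Function.update_of_ne hw]

variable (B : BayesNet n)

lemma sigma_pos (v : Fin n) (x : Fin n → Bool) : 0 < B.sigma v x := by
  have h1 := B.cond_pos v x
  have h2 := B.cond_lt_one v x
  exact Real.sqrt_pos.mpr (mul_pos h1 (by linarith))

lemma sigma_sq (v : Fin n) (x : Fin n → Bool) :
    B.sigma v x ^ 2 = B.cond v x * (1 - B.cond v x) := by
  have h1 := B.cond_pos v x
  have h2 := B.cond_lt_one v x
  exact Real.sq_sqrt (by nlinarith)

lemma cond_update (hord : ∀ v u, u ∈ B.pa v → u < v) {u v : Fin n} (hvu : v ∉ B.pa u)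
    (x : Fin n → Bool) (b : Bool) :
    B.cond u (Function.update x v b) = B.cond u x := by
  apply B.cond_local
  intro w hw
  have hwv : w ≠ v := by rintro rfl; exact hvu hw
  exact Function.update_of_ne hwv _ _

lemma phi_update (hord : ∀ v u, u ∈ B.pa v → u < v) {u v : Fin n} (huv : u < v)
    (x : Fin n → Bool) (b : Bool) :
    B.phi u (Function.update x v b) = B.phi u x := by
  have hvu : v ∉ B.pa u := fun h => absurd (hord u v h) (by exact fun h' => absurd (h'.trans huv) (lt_irrefl v))
  have hc : B.cond u (Function.update x v b) = B.cond u x := cond_update B hord hvu x b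
  unfold BayesNet.phi BayesNet.sigma
  rw [hc, Function.update_of_ne (ne_of_lt huv)]

lemma pfac_update (hord : ∀ v u, u ∈ B.pa v → u < v) {u v : Fin n} (huv : u < v)
    (x : Fin n → Bool) (b : Bool) :
    (if (Function.update x v b) u then B.cond u (Function.update x v b)
      else 1 - B.cond u (Function.update x v b))
      = (if x u then B.cond u x else 1 - B.cond u x) := by
  have hvu : v ∉ B.pa u := fun h => absurd (hord u v h) (fun h' => absurd (h'.trans huv) (lt_irrefl v))
  rw [cond_update B hord hvu x b, Function.update_of_ne (ne_of_lt huv)]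

lemma phiS_erase (S : Finset (Fin n)) (v : Fin n) (x : Fin n → Bool) :
    B.phiS S x = (if v ∈ S then B.phi v x else 1) * B.phiS (S.erase v) x := by
  by_cases h : v ∈ S
  · simp only [h, if_true]
    exact (Finset.mul_prod_erase S _ h).symm
  · simp [h, Finset.erase_eq_of_notMem h]

lemma ortho_aux (hord : ∀ v u, u ∈ B.pa v → u < v) (j : ℕ) :
    ∀ (S T : Finset (Fin n)), (∀ i ∈ S, (i : ℕ) < j) → (∀ i ∈ T, (i : ℕ) < j) →
    ∑ x : Fin n → Bool,
        (∏ u ∈ univ.filter (fun u : Fin n => (u : ℕ) < j),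
            (if x u then B.cond u x else 1 - B.cond u x)) * (B.phiS S x * B.phiS T x)
      = (if S = T then 1 else 0) * 2 ^ (n - j) := by
  induction j with
  | zero =>
    intro S T hS hT
    have hS0 : S = ∅ := Finset.eq_empty_of_forall_notMem (fun i hi => Nat.not_lt_zero _ (hS i hi))
    have hT0 : T = ∅ := Finset.eq_empty_of_forall_notMem (fun i hi => Nat.not_lt_zero _ (hT i hi))
    subst hS0; subst hT0
    have hfe : univ.filter (fun u : Fin n => (u : ℕ) < 0) = ∅ := by
      apply Finset.filter_false_of_mem; intro u _; exact Nat.not_lt_zero _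
    simp [hfe, BayesNet.phiS, Finset.card_univ]
  | succ j ih =>
    intro S T hS hT
    by_cases hj : j < n
    · set v : Fin n := ⟨j, hj⟩ with hv
      have hvj : (v : ℕ) = j := rfl
      have hfilter : univ.filter (fun u : Fin n => (u : ℕ) < j + 1)
          = insert v (univ.filter fun u : Fin n => (u : ℕ) < j) := by
        ext u
        simp only [Finset.mem_filter, Finset.mem_univ, true_and, Finset.mem_insert]
        constructor
        · intro h
          rcases Nat.lt_succ_iff_lt_or_eq.mp h with h' | h'
          · exact Or.inr h'
          · exact Or.inl (Fin.ext h')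
        · rintro (h | h)
          · rw [h]; exact Nat.lt_succ_self j
          · exact Nat.lt_succ_of_lt h
      have hvnot : v ∉ univ.filter (fun u : Fin n => (u : ℕ) < j) := by
        simp [hvj]
      -- abbreviations
      set S' := S.erase v with hS'
      set T' := T.erase v with hT'
      have hS'lt : ∀ i ∈ S', (i : ℕ) < j := by
        intro i hi
        have h1 : i ≠ v := (Finset.mem_erase.mp hi).1
        have h2 := hS i (Finset.mem_erase.mp hi).2
        have : (i : ℕ) ≠ j := fun h => h1 (Fin.ext h)
        omega
      have hT'lt : ∀ i ∈ T', (i : ℕ) < j := by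
        intro i hi
        have h1 : i ≠ v := (Finset.mem_erase.mp hi).1
        have h2 := hT i (Finset.mem_erase.mp hi).2
        have : (i : ℕ) ≠ j := fun h => h1 (Fin.ext h)
        omega
      -- the invariant part G
      set P : (Fin n → Bool) → ℝ := fun x =>
        ∏ u ∈ univ.filter (fun u : Fin n => (u : ℕ) < j),
            (if x u then B.cond u x else 1 - B.cond u x) with hP
      set G : (Fin n → Bool) → ℝ := fun x => P x * (B.phiS S' x * B.phiS T' x) with hG
      have hGinv : ∀ x b, G (Function.update x v b) = G x := by
        intro x b
        simp only [hG, hP, BayesNet.phiS]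
        congr 1
        · apply Finset.prod_congr rfl
          intro u hu
          have hu' : (u : ℕ) < j := (Finset.mem_filter.mp hu).2
          exact pfac_update B hord (show u < v from hu') x b
        congr 1
        · apply Finset.prod_congr rfl
          intro u hu
          exact phi_update B hord (show u < v from hS'lt u hu) x b
        · apply Finset.prod_congr rfl
          intro u hu
          exact phi_update B hord (show u < v from hT'lt u hu) x b
      -- sum over all x of G
      have hGsum : ∑ x : Fin n → Bool, G x = (if S' = T' then 1 else 0) * 2 ^ (n - j) :=
        ih S' T' hS'lt hT'lt
      -- half sum
      have hGhalf : ∑ x ∈ univ.filter (fun x : Fin n → Bool => x v = false), G x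
          = (if S' = T' then 1 else 0) * 2 ^ (n - (j + 1)) := by
        have h2 : ∑ x : Fin n → Bool, G x
            = 2 * ∑ x ∈ univ.filter (fun x : Fin n → Bool => x v = false), G x := by
          rw [sum_out v G]
          rw [Finset.mul_sum]
          apply Finset.sum_congr rfl
          intro x hx
          rw [hGinv x true]; ring
        have hpow : (2 : ℝ) ^ (n - j) = 2 * 2 ^ (n - (j + 1)) := by
          have : n - j = (n - (j + 1)) + 1 := by omega
          rw [this]; ring
        have := hGsum
        rw [h2, hpow] at this
        nlinarith [this]
      -- main rewriting of the sum
      have hmain : ∑ x : Fin n → Bool,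
          (∏ u ∈ univ.filter (fun u : Fin n => (u : ℕ) < j + 1),
              (if x u then B.cond u x else 1 - B.cond u x)) * (B.phiS S x * B.phiS T x)
          = (if (v ∈ S ↔ v ∈ T) then 1 else 0) *
              ∑ x ∈ univ.filter (fun x : Fin n → Bool => x v = false), G x := by
        set F : (Fin n → Bool) → ℝ := fun x =>
          (∏ u ∈ univ.filter (fun u : Fin n => (u : ℕ) < j + 1),
              (if x u then B.cond u x else 1 - B.cond u x)) * (B.phiS S x * B.phiS T x) with hF
        rw [sum_out v F, Finset.mul_sum]
        apply Finset.sum_congr rfl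
        intro x hx
        have hxv : x v = false := (Finset.mem_filter.mp hx).2
        -- decompose F
        have hdecomp : ∀ y : Fin n → Bool,
            F y = ((if y v then B.cond v y else 1 - B.cond v y)
              * ((if v ∈ S then B.phi v y else 1) * (if v ∈ T then B.phi v y else 1))) * G y := by
          intro y
          simp only [hF, hG, hP, hfilter, Finset.prod_insert hvnot]
          rw [phiS_erase B S v y, phiS_erase B T v y]
          ring
        rw [hdecomp x, hdecomp (Function.update x v true), hGinv x true]
        set c := B.cond v x with hc
        have hcu : B.cond v (Function.update x v true) = c := by
          apply B.cond_local
          intro w hw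
          have hwv : w ≠ v := ne_of_lt (hord v w hw)
          exact Function.update_of_ne hwv _ _
        have hsu : B.sigma v (Function.update x v true) = B.sigma v x := by
          unfold BayesNet.sigma; rw [hcu]
        have hphix : B.phi v x = -(c / B.sigma v x) := by
          unfold BayesNet.phi
          rw [hxv]; simp [b2r, hc]; ring
        have hphiu : B.phi v (Function.update x v true) = (1 - c) / B.sigma v x := by
          unfold BayesNet.phi
          rw [hsu, hcu, Function.update_self]
          simp [b2r]
        have hxvu : (Function.update x v true) v = true := Function.update_self _ _ _
        have hs := sigma_pos B v x
        have hs2 := sigma_sq B v x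
        have hc0 := B.cond_pos v x
        have hc1 := B.cond_lt_one v x
        rw [hxv, hxvu, hcu, hphix, hphiu]
        have hs2' : B.sigma v x ^ 2 = c * (1 - c) := by rw [hs2, ← hc]
        have hsne : B.sigma v x ≠ 0 := ne_of_gt hs
        by_cases hvS : v ∈ S <;> by_cases hvT : v ∈ T <;>
          simp only [hvS, hvT, if_true, if_false, iff_true, iff_false,
            not_true_eq_false, not_false_eq_true, Bool.false_eq_true, ite_true, ite_false]
        · field_simp
          linear_combination (-(G x)) * hs2'
        · field_simp
          ring
        · field_simp
          ring
        · ring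
      rw [hmain, hGhalf]
      have hST : (S = T) ↔ (S' = T' ∧ (v ∈ S ↔ v ∈ T)) := by
        constructor
        · intro h; subst h; exact ⟨rfl, Iff.rfl⟩
        · rintro ⟨h1, h2⟩
          by_cases hvS : v ∈ S
          · have hvT : v ∈ T := h2.mp hvS
            rw [← Finset.insert_erase hvS, ← Finset.insert_erase hvT, ← hS', ← hT', h1]
          · have hvT : v ∉ T := fun h => hvS (h2.mpr h)
            rw [← Finset.erase_eq_of_notMem hvS, ← Finset.erase_eq_of_notMem hvT, ← hS', ← hT', h1]
      have hcoef : (if (v ∈ S ↔ v ∈ T) then (1:ℝ) else 0) * (if S' = T' then (1:ℝ) else 0)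
          = (if S = T then (1:ℝ) else 0) := by
        by_cases h1 : S' = T' <;> by_cases h2 : (v ∈ S ↔ v ∈ T)
        · rw [if_pos h1, if_pos h2, if_pos (hST.mpr ⟨h1, h2⟩)]; ring
        · rw [if_neg h2, if_neg (fun h => h2 (hST.mp h).2)]; ring
        · rw [if_neg h1, if_neg (fun h => h1 (hST.mp h).1)]; ring
        · rw [if_neg h2, if_neg (fun h => h2 (hST.mp h).2)]; ring
      linear_combination ((2:ℝ) ^ (n - (j + 1))) * hcoef
    · -- j ≥ n : nothing changes
      push_neg at hj
      have hfe : univ.filter (fun u : Fin n => (u : ℕ) < j + 1)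
          = univ.filter (fun u : Fin n => (u : ℕ) < j) := by
        apply Finset.filter_congr
        intro u _
        have := u.isLt
        omega
      have hsub : n - (j + 1) = n - j := by omega
      rw [hfe, hsub]
      exact ih S T (fun i hi => lt_of_lt_of_le i.isLt hj) (fun i hi => lt_of_lt_of_le i.isLt hj)

lemma ortho (hord : ∀ v u, u ∈ B.pa v → u < v) (S T : Finset (Fin n)) :
    B.expect (fun x => B.phiS S x * B.phiS T x) = if S = T then 1 else 0 := by
  have h := ortho_aux B hord n S T (fun i _ => i.isLt) (fun i _ => i.isLt)
  have hfu : univ.filter (fun u : Fin n => (u : ℕ) < n) = univ :=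
    Finset.filter_true_of_mem (fun u _ => u.isLt)
  rw [hfu] at h
  simpa [BayesNet.expect, BayesNet.prob] using h

end BNAux

/-- With `g_α(u) = Σ_{β ⊆ first n−k coords} f̂_{β∪α} φ_β(u)` and
`U` the (marginal of the) first `n−k` coordinates of `X ∼ D` (note `g_α` only
depends on those coordinates), `E_U[g_α(U)²] = Σ_β (f̂_{β∪α})²`. -/
theorem bn_km_partial_spectrum_energy {n : ℕ} (B : BayesNet n)
    (hord : ∀ v u, u ∈ B.pa v → u < v)
    (f : (Fin n → Bool) → ℝ) (k : ℕ) (hk : k ≤ n)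
    (α : Finset (Fin n)) (hα : ∀ i ∈ α, n - k ≤ (i : ℕ)) :
    B.expect (fun x =>
        (∑ β ∈ univ.filter (fun β : Finset (Fin n) => ∀ i ∈ β, (i : ℕ) < n - k),
          B.coeff f (β ∪ α) * B.phiS β x) ^ 2)
      = ∑ β ∈ univ.filter (fun β : Finset (Fin n) => ∀ i ∈ β, (i : ℕ) < n - k),
          (B.coeff f (β ∪ α)) ^ 2 := by
    classical
  set s := univ.filter (fun β : Finset (Fin n) => ∀ i ∈ β, (i : ℕ) < n - k) with hs
  set a : Finset (Fin n) → ℝ := fun β => B.coeff f (β ∪ α) with ha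
  have key : ∀ β γ : Finset (Fin n),
      B.expect (fun x => B.phiS β x * B.phiS γ x) = if β = γ then 1 else 0 :=
    BNAux.ortho B hord
  unfold BayesNet.expect
  have step : ∀ x : Fin n → Bool,
      B.prob x * (∑ β ∈ s, a β * B.phiS β x) ^ 2
        = ∑ β ∈ s, ∑ γ ∈ s, (a β * a γ) * (B.prob x * (B.phiS β x * B.phiS γ x)) := by
    intro x
    rw [sq, Finset.sum_mul_sum, Finset.mul_sum]
    apply Finset.sum_congr rfl
    intro β _
    rw [Finset.mul_sum]
    apply Finset.sum_congr rfl
    intro γ _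
    ring
  calc ∑ x : Fin n → Bool, B.prob x * (∑ β ∈ s, a β * B.phiS β x) ^ 2
      = ∑ x : Fin n → Bool, ∑ β ∈ s, ∑ γ ∈ s,
          (a β * a γ) * (B.prob x * (B.phiS β x * B.phiS γ x)) := by
        exact Finset.sum_congr rfl (fun x _ => step x)
    _ = ∑ β ∈ s, ∑ γ ∈ s, (a β * a γ) *
          ∑ x : Fin n → Bool, B.prob x * (B.phiS β x * B.phiS γ x) := by
        rw [Finset.sum_comm]
        apply Finset.sum_congr rfl
        intro β _
        rw [Finset.sum_comm]
        apply Finset.sum_congr rfl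
        intro γ _
        rw [Finset.mul_sum]
    _ = ∑ β ∈ s, ∑ γ ∈ s, (a β * a γ) * (if β = γ then 1 else 0) := by
        apply Finset.sum_congr rfl
        intro β _
        apply Finset.sum_congr rfl
        intro γ _
        congr 1
        exact key β γ
    _ = ∑ β ∈ s, (a β) ^ 2 := by
        apply Finset.sum_congr rfl
        intro β hβ
        rw [Finset.sum_eq_single β]
        · simp [sq]
        · intro γ _ hne
          simp [Ne.symm hne]
        · intro h; exact absurd hβ h
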